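/- Let K be the attractor of a G-symmetric P-polygonal system where P is a regular n-gon with center O and G contains the rotation group of P. If γ is the unique arc in the dendrite K joining O to a vertex A of P, and f is the rotation by 2π/n about O, then the main tree γ̂ (the union of all arcs in K joining pairs of vertices of P) equals ⋃_{k=1}^{n} f^k(γ), and O is a point of order n in γ̂. -/

import Mathlib

open Complex Real unitInterval

/-- `A` is an arc from `a` to `b`. -/
def IsArc {X : Type*} [TopologicalSpace X] (A : Set X) (a b : X) : Prop :=
  ∃ φ : I → X, Continuous φ ∧ Function.Injective φ ∧
    Set.range φ = A ∧ φ 0 = a ∧ φ 1 = b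

section ArcBasics

open Set Metric Function

lemma IsArc.symm {X : Type*} [TopologicalSpace X] {A : Set X} {a b : X}
    (h : IsArc A a b) : IsArc A b a := by
  obtain ⟨φ, hc, hi, hr, h0, h1⟩ := h
  refine ⟨φ ∘ unitInterval.symm, hc.comp continuous_symm,
    hi.comp (Involutive.injective unitInterval.symm_symm), ?_, ?_, ?_⟩
  · rw [Set.range_comp, (Involutive.surjective unitInterval.symm_symm).range_eq,
      Set.image_univ, hr]
  · simp [Function.comp, unitInterval.symm_zero, h1]
  · simp [Function.comp, unitInterval.symm_one, h0]

lemma IsArc.mem_left {X : Type*} [TopologicalSpace X] {A : Set X} {a b : X}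
    (h : IsArc A a b) : a ∈ A := by
  obtain ⟨φ, _, _, hr, h0, _⟩ := h
  rw [← hr, ← h0]; exact Set.mem_range_self _

lemma IsArc.mem_right {X : Type*} [TopologicalSpace X] {A : Set X} {a b : X}
    (h : IsArc A a b) : b ∈ A := h.symm.mem_left

lemma IsArc.isCompact {X : Type*} [TopologicalSpace X] [T2Space X] {A : Set X} {a b : X}
    (h : IsArc A a b) : IsCompact A := by
  obtain ⟨φ, hc, _, hr, _, _⟩ := h
  rw [← hr]; exact isCompact_range hc

lemma IsArc.isPreconnected {X : Type*} [TopologicalSpace X] {A : Set X} {a b : X}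
    (h : IsArc A a b) : IsPreconnected A := by
  obtain ⟨φ, hc, _, hr, _, _⟩ := h
  rw [← hr]; exact isPreconnected_range hc

/-- initial segment of an injective parametrization is an arc -/
lemma isArc_initial {X : Type*} [TopologicalSpace X] {φ : I → X} (hc : Continuous φ)
    (hi : Function.Injective φ) {t : I} (ht : t ≠ 0) :
    IsArc (φ '' {s : I | s ≤ t}) (φ 0) (φ t) := by
  have htR : (0:ℝ) < (t:ℝ) := by
    rcases lt_or_eq_of_le t.2.1 with h | h
    · exact h
    · exact absurd (Subtype.ext h.symm) ht
  set τ : I → I := fun s => ⟨(t:ℝ) * (s:ℝ), unitInterval.mul_mem t.2 s.2⟩ with hτ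
  have hτc : Continuous τ := Continuous.subtype_mk (continuous_const.mul continuous_subtype_val) _
  have hτi : Function.Injective τ := by
    intro s₁ s₂ h
    have := congrArg Subtype.val h
    exact Subtype.ext (mul_left_cancel₀ (ne_of_gt htR) this)
  have hτr : Set.range τ = {s : I | s ≤ t} := by
    ext u
    constructor
    · rintro ⟨s, rfl⟩
      show (t:ℝ) * (s:ℝ) ≤ (t:ℝ)
      exact mul_le_of_le_one_right (le_of_lt htR) s.2.2
    · intro hu
      refine ⟨⟨(u:ℝ)/(t:ℝ), ⟨div_nonneg u.2.1 (le_of_lt htR), (div_le_one htR).2 hu⟩⟩, ?_⟩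
      apply Subtype.ext
      show (t:ℝ) * ((u:ℝ)/(t:ℝ)) = (u:ℝ)
      rw [mul_comm, div_mul_cancel₀ _ (ne_of_gt htR)]
  refine ⟨φ ∘ τ, hc.comp hτc, hi.comp hτi, ?_, ?_, ?_⟩
  · rw [Set.range_comp, hτr]
  · show φ (τ 0) = φ 0
    congr 1; apply Subtype.ext; show (t:ℝ) * ((0:I):ℝ) = ((0:I):ℝ); simp
  · show φ (τ 1) = φ t
    congr 1; apply Subtype.ext; show (t:ℝ) * ((1:I):ℝ) = (t:ℝ); simp

lemma isArc_final {X : Type*} [TopologicalSpace X] {φ : I → X} (hc : Continuous φ)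
    (hi : Function.Injective φ) {t : I} (ht : t ≠ 1) :
    IsArc (φ '' {s : I | t ≤ s}) (φ t) (φ 1) := by
  have htR : (t:ℝ) < 1 := by
    rcases lt_or_eq_of_le t.2.2 with h | h
    · exact h
    · exact absurd (Subtype.ext h) ht
  have hmem : ∀ s : I, (t:ℝ) + (s:ℝ) * (1 - (t:ℝ)) ∈ Set.Icc (0:ℝ) 1 := by
    intro s
    constructor
    · have : (0:ℝ) ≤ (s:ℝ) * (1 - (t:ℝ)) := mul_nonneg s.2.1 (by linarith)
      have := t.2.1; linarith
    · have : (s:ℝ) * (1 - (t:ℝ)) ≤ 1 * (1 - (t:ℝ)) :=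
        mul_le_mul_of_nonneg_right s.2.2 (by linarith)
      linarith
  set τ : I → I := fun s => ⟨(t:ℝ) + (s:ℝ) * (1 - (t:ℝ)), hmem s⟩ with hτ
  have hτc : Continuous τ := Continuous.subtype_mk
    (continuous_const.add (continuous_subtype_val.mul continuous_const)) _
  have hτi : Function.Injective τ := by
    intro s₁ s₂ h
    have h' := congrArg Subtype.val h
    simp only [τ] at h'
    have : (s₁:ℝ) * (1 - (t:ℝ)) = (s₂:ℝ) * (1 - (t:ℝ)) := by linarith
    exact Subtype.ext (mul_right_cancel₀ (by intro h0; linarith) this)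
  have hτr : Set.range τ = {s : I | t ≤ s} := by
    ext u
    constructor
    · rintro ⟨s, rfl⟩
      show (t:ℝ) ≤ (t:ℝ) + (s:ℝ) * (1 - (t:ℝ))
      have : (0:ℝ) ≤ (s:ℝ) * (1 - (t:ℝ)) := mul_nonneg s.2.1 (by linarith)
      linarith
    · intro hu
      have huR : (t:ℝ) ≤ (u:ℝ) := hu
      refine ⟨⟨((u:ℝ) - (t:ℝ))/(1 - (t:ℝ)), ⟨div_nonneg (by linarith) (by linarith),
        (div_le_one (by linarith)).2 (by have := u.2.2; linarith)⟩⟩, ?_⟩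
      apply Subtype.ext
      show (t:ℝ) + ((u:ℝ) - (t:ℝ))/(1 - (t:ℝ)) * (1 - (t:ℝ)) = (u:ℝ)
      rw [div_mul_cancel₀ _ (by intro h0; linarith)]
      ring
  refine ⟨φ ∘ τ, hc.comp hτc, hi.comp hτi, ?_, ?_, ?_⟩
  · rw [Set.range_comp, hτr]
  · show φ (τ 0) = φ t
    congr 1; apply Subtype.ext; show (t:ℝ) + ((0:I):ℝ) * (1 - (t:ℝ)) = (t:ℝ); simp
  · show φ (τ 1) = φ 1
    congr 1; apply Subtype.ext; show (t:ℝ) + ((1:I):ℝ) * (1 - (t:ℝ)) = ((1:I):ℝ); simp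

end ArcBasics


section ArcTrans

open Set Function

/-- Concatenation of two injective paths meeting only at the common endpoint. -/
lemma isArc_trans {X : Type*} [TopologicalSpace X] {a b c : X} {A B : Set X}
    (hA : IsArc A a b) (hB : IsArc B b c) (hint : A ∩ B ⊆ {b}) :
    IsArc (A ∪ B) a c := by
  obtain ⟨φ, φc, φi, φr, φ0, φ1⟩ := hA
  obtain ⟨ψ, ψc, ψi, ψr, ψ0, ψ1⟩ := hB
  let p : Path a b := ⟨⟨φ, φc⟩, φ0, φ1⟩
  let q : Path b c := ⟨⟨ψ, ψc⟩, ψ0, ψ1⟩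
  have hp : ∀ t, p t = φ t := fun _ => rfl
  have hq : ∀ t, q t = ψ t := fun _ => rfl
  have hrange : Set.range (p.trans q) = A ∪ B := by
    rw [Path.trans_range]
    have h1 : Set.range p = A := φr
    have h2 : Set.range q = B := ψr
    rw [h1, h2]
  refine ⟨p.trans q, (p.trans q).continuous, ?_, hrange, (p.trans q).source,
    (p.trans q).target⟩
  intro s t hst
  have key : ∀ u w : I, (u:ℝ) ≤ 1/2 → ¬((w:ℝ) ≤ 1/2) → (p.trans q) u = (p.trans q) w → False := by
    intro u w hu hw heq
    rw [Path.trans_apply, Path.trans_apply] at heq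
    rw [dif_pos hu, dif_neg hw, hp, hq] at heq
    have hmem : φ ⟨2*(u:ℝ), by constructor <;> linarith [u.2.1, u.2.2]⟩ ∈ A ∩ B := by
      constructor
      · rw [← φr]; exact Set.mem_range_self _
      · rw [show φ _ = ψ _ from heq, ← ψr]; exact Set.mem_range_self _
    have hb' : φ _ = b := hint hmem
    have hu1 := φi (by rw [hb', φ1] :
      φ (⟨2*(u:ℝ), by constructor <;> linarith [u.2.1, u.2.2]⟩ : I) = φ 1)
    have hw0 := ψi (by rw [← heq, hb', ψ0] :
      ψ (⟨2*(w:ℝ)-1, by constructor <;> linarith [not_le.1 hw, w.2.1, w.2.2]⟩ : I) = ψ 0)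
    have hu' : 2*(u:ℝ) = 1 := by
      have := congrArg Subtype.val hu1; simpa using this
    have hw' : 2*(w:ℝ)-1 = 0 := by
      have := congrArg Subtype.val hw0; simpa using this
    have : (w:ℝ) ≤ 1/2 := by linarith
    exact hw this
  by_cases hs : (s:ℝ) ≤ 1/2 <;> by_cases ht : (t:ℝ) ≤ 1/2
  · rw [Path.trans_apply, Path.trans_apply, dif_pos hs, dif_pos ht, hp, hp] at hst
    have := congrArg Subtype.val (φi hst)
    exact Subtype.ext (by simpa using this)
  · exact absurd hst (by intro h; exact key s t hs ht h)
  · exact absurd hst.symm (by intro h; exact key t s ht hs h)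
  · rw [Path.trans_apply, Path.trans_apply, dif_neg hs, dif_neg ht, hq, hq] at hst
    have := congrArg Subtype.val (ψi hst)
    exact Subtype.ext (by simpa using this)

/-- endpoint of an arc is determined by the set and the other endpoint -/
lemma isArc_endpoint_unique {X : Type*} [TopologicalSpace X] [T2Space X]
    {A : Set X} {a b b' : X} (h : IsArc A a b) (h' : IsArc A a b') : b = b' := by
  have fact01 : Fact ((0:ℝ) ≤ 1) := ⟨zero_le_one⟩
  obtain ⟨φ, φc, φi, φr, φ0, φ1⟩ := h
  obtain ⟨ψ, ψc, ψi, ψr, ψ0, ψ1⟩ := h'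
  have hφmem : ∀ t, φ t ∈ A := fun t => φr ▸ Set.mem_range_self t
  have hψmem : ∀ t, ψ t ∈ A := fun t => ψr ▸ Set.mem_range_self t
  let e : I ≃ A := Equiv.ofBijective (fun t => ⟨φ t, hφmem t⟩)
    ⟨fun s t hst => φi (congrArg Subtype.val hst), by
      rintro ⟨x, hx⟩
      obtain ⟨t, rfl⟩ := φr ▸ hx
      exact ⟨t, rfl⟩⟩
  have ec : Continuous e := Continuous.subtype_mk φc _
  let E : I ≃ₜ A := Continuous.homeoOfEquivCompactToT2 ec
  have hE : ∀ t : I, (E t : X) = φ t := fun t => rfl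
  let h : I → I := fun t => E.symm ⟨ψ t, hψmem t⟩
  have hc : Continuous h := E.symm.continuous.comp (Continuous.subtype_mk ψc _)
  have hinj : Function.Injective h := by
    intro s t hst
    have := E.symm.injective hst
    exact ψi (congrArg Subtype.val this)
  have h0 : h 0 = 0 := by
    have he0 : E 0 = ⟨ψ 0, hψmem 0⟩ :=
      Subtype.ext (show φ 0 = ψ 0 by rw [φ0, ψ0])
    show E.symm ⟨ψ 0, hψmem 0⟩ = 0
    rw [← he0, Homeomorph.symm_apply_apply]
  have hsurj : ∃ t, h t = 1 := by
    have hb : φ 1 ∈ Set.range ψ := by rw [ψr, ← φr]; exact Set.mem_range_self _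
    obtain ⟨t, ht⟩ := hb
    refine ⟨t, ?_⟩
    have he1 : E 1 = ⟨ψ t, hψmem t⟩ := Subtype.ext (show φ 1 = ψ t from ht.symm)
    show E.symm ⟨ψ t, hψmem t⟩ = 1
    rw [← he1, Homeomorph.symm_apply_apply]
  rcases hc.strictMono_of_inj_boundedOrder' hinj with hm | han
  · obtain ⟨t, ht⟩ := hsurj
    have ht1 : t ≤ 1 := Subtype.coe_le_coe.1 (by simpa using t.2.2)
    have hle : h t ≤ h 1 := hm.monotone ht1
    rw [ht] at hle
    have hge : h 1 ≤ 1 := Subtype.coe_le_coe.1 (by simpa using (h 1).2.2)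
    have h1 : h 1 = 1 := le_antisymm hge hle
    have key : E (h 1) = ⟨ψ 1, hψmem 1⟩ := by
      show E (E.symm ⟨ψ 1, hψmem 1⟩) = _
      rw [Homeomorph.apply_symm_apply]
    rw [h1] at key
    have h2 : φ 1 = ψ 1 := congrArg Subtype.val key
    rw [← φ1, ← ψ1, h2]
  · exfalso
    have h01 : (0:I) < 1 := by
      refine Subtype.mk_lt_mk.2 ?_
      norm_num
    have hlt := han h01
    rw [h0] at hlt
    have : ((h 1 : I) : ℝ) < ((0:I):ℝ) := Subtype.coe_lt_coe.2 hlt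
    simp only [Set.Icc.coe_zero] at this
    linarith [(h 1).2.1]

end ArcTrans


structure ArcSystem (K : Set ℂ) (arc : ℂ → ℂ → Set ℂ) : Prop where
  ex : ∀ a b : ℂ, a ∈ K → b ∈ K → a ≠ b → IsArc (arc a b) a b ∧ arc a b ⊆ K
  uniq : ∀ (a b : ℂ) (A : Set ℂ), a ∈ K → b ∈ K → a ≠ b → IsArc A a b → A ⊆ K → A = arc a b
  refl : ∀ a : ℂ, arc a a = {a}

namespace ArcSystem

open Set Metric Function

variable {K : Set ℂ} {arc : ℂ → ℂ → Set ℂ} (H : ArcSystem K arc)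
include H

lemma arc_subset {a b : ℂ} (ha : a ∈ K) (hb : b ∈ K) : arc a b ⊆ K := by
  by_cases hab : a = b
  · subst hab; rw [H.refl]; exact Set.singleton_subset_iff.2 ha
  · exact (H.ex a b ha hb hab).2

lemma mem_left {a b : ℂ} (ha : a ∈ K) (hb : b ∈ K) : a ∈ arc a b := by
  by_cases hab : a = b
  · subst hab; rw [H.refl]; exact rfl
  · exact (H.ex a b ha hb hab).1.mem_left

lemma mem_right {a b : ℂ} (ha : a ∈ K) (hb : b ∈ K) : b ∈ arc a b := by
  by_cases hab : a = b
  · subst hab; rw [H.refl]; exact rfl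
  · exact (H.ex a b ha hb hab).1.mem_right

lemma arc_symm {a b : ℂ} (ha : a ∈ K) (hb : b ∈ K) : arc a b = arc b a := by
  by_cases hab : a = b
  · subst hab; rfl
  · exact H.uniq b a (arc a b) hb ha (Ne.symm hab) (H.ex a b ha hb hab).1.symm
      (H.ex a b ha hb hab).2

lemma arc_isCompact {a b : ℂ} (ha : a ∈ K) (hb : b ∈ K) : IsCompact (arc a b) := by
  by_cases hab : a = b
  · subst hab; rw [H.refl]; exact isCompact_singleton
  · exact (H.ex a b ha hb hab).1.isCompact

lemma arc_isPreconnected {a b : ℂ} (ha : a ∈ K) (hb : b ∈ K) :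
    IsPreconnected (arc a b) := by
  by_cases hab : a = b
  · subst hab; rw [H.refl]; exact isPreconnected_singleton
  · exact (H.ex a b ha hb hab).1.isPreconnected

/-- If `φ` parametrizes `arc a b` then `arc a (φ t)` is the initial segment. -/
lemma arc_left_param {a b : ℂ} (ha : a ∈ K) (hb : b ∈ K) (hab : a ≠ b)
    {φ : I → ℂ} (hc : Continuous φ) (hi : Function.Injective φ)
    (hr : Set.range φ = arc a b) (h0 : φ 0 = a)
    {t : I} (ht : t ≠ 0) : arc a (φ t) = φ '' {s : I | s ≤ t} := by
  have hsub : φ '' {s : I | s ≤ t} ⊆ K := by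
    intro x hx
    obtain ⟨s, _, rfl⟩ := hx
    exact H.arc_subset ha hb (hr ▸ Set.mem_range_self s)
  have hφtK : φ t ∈ K := H.arc_subset ha hb (hr ▸ Set.mem_range_self t)
  have hne : a ≠ φ t := by
    rw [← h0]; intro h; exact ht (hi h).symm
  have := isArc_initial hc hi ht
  rw [h0] at this
  exact (H.uniq a (φ t) _ ha hφtK hne this hsub).symm

lemma arc_right_param {a b : ℂ} (ha : a ∈ K) (hb : b ∈ K) (hab : a ≠ b)
    {φ : I → ℂ} (hc : Continuous φ) (hi : Function.Injective φ)
    (hr : Set.range φ = arc a b) (h1 : φ 1 = b)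
    {t : I} (ht : t ≠ 1) : arc (φ t) b = φ '' {s : I | t ≤ s} := by
  have hsub : φ '' {s : I | t ≤ s} ⊆ K := by
    intro x hx
    obtain ⟨s, _, rfl⟩ := hx
    exact H.arc_subset ha hb (hr ▸ Set.mem_range_self s)
  have hφtK : φ t ∈ K := H.arc_subset ha hb (hr ▸ Set.mem_range_self t)
  have hne : φ t ≠ b := by
    rw [← h1]; intro h; exact ht (hi h)
  have := isArc_final hc hi ht
  rw [h1] at this
  exact (H.uniq (φ t) b _ hφtK hb hne this hsub).symm

/-- D3: initial subarc inclusion -/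
lemma arc_initial_subset {a b x : ℂ} (ha : a ∈ K) (hb : b ∈ K) (hab : a ≠ b)
    (hx : x ∈ arc a b) : arc a x ⊆ arc a b := by
  obtain ⟨⟨φ, hc, hi, hr, h0, h1⟩, _⟩ := H.ex a b ha hb hab
  by_cases hxa : x = a
  · subst hxa; rw [H.refl]
    exact Set.singleton_subset_iff.2 (H.mem_left ha hb)
  · obtain ⟨t, rfl⟩ := hr ▸ hx
    have ht : t ≠ 0 := by rintro rfl; exact hxa h0
    rw [H.arc_left_param ha hb hab hc hi hr h0 ht]
    intro y hy
    obtain ⟨s, _, rfl⟩ := hy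
    exact hr ▸ Set.mem_range_self s

/-- D4: splitting an arc at an interior point -/
lemma arc_split {a b x : ℂ} (ha : a ∈ K) (hb : b ∈ K) (hab : a ≠ b)
    (hx : x ∈ arc a b) : arc a b = arc a x ∪ arc x b := by
  obtain ⟨⟨φ, hc, hi, hr, h0, h1⟩, _⟩ := H.ex a b ha hb hab
  by_cases hxa : x = a
  · rw [hxa, H.refl]
    exact (Set.union_eq_self_of_subset_left
      (Set.singleton_subset_iff.2 (H.mem_left ha hb))).symm
  by_cases hxb : x = b
  · rw [hxb, H.refl]
    exact (Set.union_eq_self_of_subset_right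
      (Set.singleton_subset_iff.2 (H.mem_right ha hb))).symm
  obtain ⟨t, rfl⟩ := hr ▸ hx
  have ht0 : t ≠ 0 := by rintro rfl; exact hxa h0
  have ht1 : t ≠ 1 := by rintro rfl; exact hxb h1
  rw [H.arc_left_param ha hb hab hc hi hr h0 ht0,
    H.arc_right_param ha hb hab hc hi hr h1 ht1, ← Set.image_union]
  have : {s : I | s ≤ t} ∪ {s : I | t ≤ s} = Set.univ := by
    ext s; simp [le_total s t]
  rw [this, Set.image_univ, hr]

/-- D5: subarcs from a common endpoint are nested -/
lemma arc_nested {a b x y : ℂ} (ha : a ∈ K) (hb : b ∈ K) (hab : a ≠ b)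
    (hx : x ∈ arc a b) (hy : y ∈ arc a b) :
    arc a x ⊆ arc a y ∨ arc a y ⊆ arc a x := by
  obtain ⟨⟨φ, hc, hi, hr, h0, h1⟩, _⟩ := H.ex a b ha hb hab
  have hyK : y ∈ K := H.arc_subset ha hb hy
  have hxK : x ∈ K := H.arc_subset ha hb hx
  by_cases hxa : x = a
  · left; subst hxa; rw [H.refl]
    exact Set.singleton_subset_iff.2 (H.mem_left ha hyK)
  by_cases hya : y = a
  · right; subst hya; rw [H.refl]
    exact Set.singleton_subset_iff.2 (H.mem_left ha hxK)
  obtain ⟨s, rfl⟩ := hr ▸ hx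
  obtain ⟨t, rfl⟩ := hr ▸ hy
  have hs0 : s ≠ 0 := by rintro rfl; exact hxa h0
  have ht0 : t ≠ 0 := by rintro rfl; exact hya h0
  rw [H.arc_left_param ha hb hab hc hi hr h0 hs0,
    H.arc_left_param ha hb hab hc hi hr h0 ht0]
  rcases le_total s t with h | h
  · left; exact Set.image_mono (fun u hu => le_trans hu h)
  · right; exact Set.image_mono (fun u hu => le_trans hu h)

/-- image of an arc under an injective continuous map preserving K -/
lemma arc_image {g : ℂ → ℂ} (hgc : Continuous g) (hgi : Function.Injective g)
    (hgK : g '' K = K) {a b : ℂ} (ha : a ∈ K) (hb : b ∈ K) (hab : a ≠ b) :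
    g '' arc a b = arc (g a) (g b) := by
  obtain ⟨⟨φ, φc, φi, φr, φ0, φ1⟩, hsub⟩ := H.ex a b ha hb hab
  have hgaK : g a ∈ K := hgK ▸ Set.mem_image_of_mem g ha
  have hgbK : g b ∈ K := hgK ▸ Set.mem_image_of_mem g hb
  have hne : g a ≠ g b := fun h => hab (hgi h)
  refine H.uniq (g a) (g b) _ hgaK hgbK hne ⟨g ∘ φ, hgc.comp φc, hgi.comp φi, ?_, ?_, ?_⟩ ?_
  · rw [Set.range_comp, φr]
  · show g (φ 0) = g a; rw [φ0]
  · show g (φ 1) = g b; rw [φ1]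
  · intro x hx
    obtain ⟨y, hy, rfl⟩ := hx
    exact hgK ▸ Set.mem_image_of_mem g (hsub hy)

/-- concatenation bound: the arc between a and b lies in the union via any z -/
lemma arc_concat {a b z : ℂ} (ha : a ∈ K) (hb : b ∈ K) (hz : z ∈ K) :
    arc a b ⊆ arc a z ∪ arc z b := by
  by_cases hab : a = b
  · subst hab
    rw [H.refl]
    exact Set.singleton_subset_iff.2 (Set.mem_union_left _ (H.mem_left ha hz))
  by_cases haz : a = z
  · subst haz
    exact Set.subset_union_right
  by_cases hzb : z = b
  · subst hzb
    exact Set.subset_union_left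
  obtain ⟨⟨φ, φc, φi, φr, φ0, φ1⟩, hsub1⟩ := H.ex a z ha hz haz
  set A2 := arc z b with hA2
  have hA2c : IsCompact A2 := H.arc_isCompact hz hb
  set T : Set ℝ := Subtype.val '' {t : I | φ t ∈ A2} with hT
  have hTcpt : IsCompact T := by
    apply IsCompact.image _ continuous_subtype_val
    exact (IsClosed.preimage φc hA2c.isClosed).isCompact
  have hTne : T.Nonempty := ⟨((1:I):ℝ), Set.mem_image_of_mem _
    (show φ 1 ∈ A2 by rw [φ1]; exact H.mem_left hz hb)⟩
  have hbdd : BddBelow T := hTcpt.bddBelow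
  have hsInfT : sInf T ∈ T := hTcpt.sInf_mem hTne
  obtain ⟨ts, htsA2, htsval⟩ := hsInfT
  set p := φ ts with hp
  have hmin : ∀ s : I, φ s ∈ A2 → ts ≤ s := by
    intro s hs
    refine Subtype.coe_le_coe.1 ?_
    rw [htsval]
    exact csInf_le hbdd ⟨s, hs, rfl⟩
  have hpA2 : p ∈ A2 := htsA2
  have hpzb : arc p b ⊆ A2 := by
    by_cases hpb : p = b
    · rw [hpb, H.refl]
      exact Set.singleton_subset_iff.2 (H.mem_right hz hb)
    · rw [hA2, H.arc_split hz hb hzb hpA2]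
      exact Set.subset_union_right
  by_cases hts0 : ts = 0
  · -- p = a, so a ∈ arc z b and arc a b ⊆ arc z b
    have haA2 : a ∈ A2 := by rw [← φ0, ← hts0]; exact hpA2
    have : arc a b ⊆ A2 := by
      rw [hA2, H.arc_split hz hb hzb haA2]
      exact Set.subset_union_right
    exact fun x hx => Set.mem_union_right _ (this hx)
  have harcap : arc a p = φ '' {s : I | s ≤ ts} :=
    H.arc_left_param ha hz haz φc φi φr φ0 hts0
  have hpK : p ∈ K := H.arc_subset hz hb hpA2
  by_cases hpb : p = b
  · have : arc a b ⊆ arc a z := by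
      rw [← hpb, harcap, ← φr]
      exact Set.image_subset_range φ _
    exact fun x hx => Set.mem_union_left _ (this hx)
  have hpa : a ≠ p := by
    rw [hp, ← φ0]
    intro h
    exact hts0 (φi h).symm
  have harc1 : IsArc (arc a p) a p := by
    rw [harcap, ← φ0]
    exact isArc_initial φc φi hts0
  have harc2 : IsArc (arc p b) p b := (H.ex p b hpK hb hpb).1
  have hint : arc a p ∩ arc p b ⊆ {p} := by
    rintro x ⟨hx1, hx2⟩
    rw [harcap] at hx1
    obtain ⟨s, hs, rfl⟩ := hx1
    have : ts ≤ s := hmin s (hpzb hx2)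
    have : s = ts := le_antisymm hs this
    rw [this]
    rfl
  have hunion : arc a p ∪ arc p b = arc a b := by
    refine H.uniq a b _ ha hb hab (isArc_trans harc1 harc2 hint) ?_
    exact Set.union_subset (H.arc_subset ha hpK) (H.arc_subset hpK hb)
  rw [← hunion]
  apply Set.union_subset_union
  · rw [harcap, ← φr]
    exact Set.image_subset_range φ _
  · exact hpzb

/-- the meet lemma: intersection of an arc from `a` with a closed "a-initial" set
is an initial subarc -/
lemma arc_meet {a b : ℂ} (ha : a ∈ K) (hb : b ∈ K) (hab : a ≠ b)
    {C : Set ℂ} (hCc : IsClosed C)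
    (hdown : ∀ x ∈ arc a b ∩ C, arc a x ⊆ C)
    (hne : ∃ x ∈ arc a b ∩ C, x ≠ a) :
    ∃ w ∈ arc a b ∩ C, w ≠ a ∧ arc a b ∩ C = arc a w := by
  obtain ⟨⟨φ, φc, φi, φr, φ0, φ1⟩, hsub⟩ := H.ex a b ha hb hab
  set T : Set ℝ := Subtype.val '' {t : I | φ t ∈ C} with hT
  have hTcpt : IsCompact T := by
    apply IsCompact.image _ continuous_subtype_val
    exact (IsClosed.preimage φc hCc).isCompact
  obtain ⟨x, ⟨hxarc, hxC⟩, hxa⟩ := hne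
  obtain ⟨s₀, hs₀⟩ := φr ▸ hxarc
  have hTne : T.Nonempty := ⟨(s₀:ℝ), Set.mem_image_of_mem _ (by rw [Set.mem_setOf_eq, hs₀]; exact hxC)⟩
  have hbdd : BddAbove T := hTcpt.bddAbove
  have hsSupT : sSup T ∈ T := hTcpt.sSup_mem hTne
  obtain ⟨ts, htsC, htsval⟩ := hsSupT
  set w := φ ts with hw
  have hts0 : ts ≠ 0 := by
    intro h
    have hle : (s₀:ℝ) ≤ sSup T :=
      le_csSup hbdd ⟨s₀, (by rw [Set.mem_setOf_eq, hs₀]; exact hxC), rfl⟩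
    rw [← htsval, h] at hle
    simp only [Set.Icc.coe_zero] at hle
    have hs00 : s₀ = 0 := Subtype.ext (le_antisymm hle s₀.2.1)
    rw [hs00, φ0] at hs₀
    exact hxa hs₀.symm
  have hwC : w ∈ C := htsC
  have hwarc : w ∈ arc a b := φr ▸ Set.mem_range_self ts
  have hwa : w ≠ a := by
    rw [hw, ← φ0]
    intro h'
    exact hts0 (φi h')
  refine ⟨w, ⟨hwarc, hwC⟩, hwa, ?_⟩
  have harcw : arc a w = φ '' {s : I | s ≤ ts} :=
    H.arc_left_param ha hb hab φc φi φr φ0 hts0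
  apply Set.Subset.antisymm
  · rintro y ⟨hy1, hy2⟩
    obtain ⟨s, rfl⟩ := φr ▸ hy1
    have hsT : (s:ℝ) ∈ T := ⟨s, hy2, rfl⟩
    have hle : (s:ℝ) ≤ (ts:ℝ) := htsval ▸ le_csSup hbdd hsT
    rw [harcw]
    exact ⟨s, Subtype.coe_le_coe.1 hle, rfl⟩
  · intro y hy
    rw [harcw] at hy
    obtain ⟨s, hs, rfl⟩ := hy
    refine ⟨φr ▸ Set.mem_range_self s, ?_⟩
    have : φ s ∈ arc a w := harcw ▸ ⟨s, hs, rfl⟩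
    exact hdown w ⟨hwarc, hwC⟩ this

end ArcSystem


namespace Stmt17Rot

lemma exp_pow (n : ℕ) (a : ℕ) :
    Complex.exp (2 * π * Complex.I / n) ^ a = Complex.exp (2 * π * Complex.I * a / n) := by
  rw [← Complex.exp_nat_mul]
  ring_nf

lemma omega_pow_n {n : ℕ} (hn : 0 < n) :
    Complex.exp (2 * π * Complex.I / n) ^ n = 1 := by
  rw [exp_pow]
  have hne : (n:ℂ) ≠ 0 := Nat.cast_ne_zero.2 hn.ne'
  rw [show 2 * (π:ℂ) * Complex.I * n / n = 2 * π * Complex.I by field_simp]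
  exact Complex.exp_two_pi_mul_I

lemma omega_pow_ne_one {n k : ℕ} (hn : 0 < n) (h0 : 0 < k) (hk : k < n) :
    Complex.exp (2 * π * Complex.I / n) ^ k ≠ 1 := by
  rw [exp_pow]
  intro h
  rw [Complex.exp_eq_one_iff] at h
  obtain ⟨z, hz⟩ := h
  have hne : (n:ℂ) ≠ 0 := Nat.cast_ne_zero.2 hn.ne'
  have h2πI : (2:ℂ) * π * Complex.I ≠ 0 := by
    simp [Real.pi_ne_zero, Complex.I_ne_zero, two_ne_zero]
  have hkz : (k:ℂ) = z * n := by
    field_simp at hz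
    have := hz
    -- 2πI * k = z * (2πI) * n
    apply mul_left_cancel₀ h2πI
    ring_nf
    ring_nf at this
    linear_combination (2 * π * Complex.I) * this
  have hkz' : (k:ℤ) = z * n := by
    exact_mod_cast hkz
  rcases le_or_gt z 0 with hz0 | hz0
  · have : (z * n : ℤ) ≤ 0 := mul_nonpos_of_nonpos_of_nonneg hz0 (by positivity)
    omega
  · have : (n:ℤ) ≤ z * n := le_mul_of_one_le_left (by positivity) hz0
    omega

lemma iterate_rot {f : ℂ → ℂ} {O ω : ℂ} (hf : ∀ z, f z = O + ω * (z - O)) :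
    ∀ (k : ℕ) (z : ℂ), f^[k] z = O + ω ^ k * (z - O) := by
  intro k
  induction k with
  | zero => intro z; simp
  | succ k ih =>
    intro z
    rw [Function.iterate_succ_apply, ih (f z), hf z]
    ring_nf

lemma attractor_rot_invariant {m : ℕ} (S : Fin m → ℂ → ℂ) (r : Fin m → ℝ)
    (hr : ∀ i, r i < 1) (hr0 : ∀ i, 0 < r i)
    (hS : ∀ i, ∀ x y : ℂ, dist (S i x) (S i y) = r i * dist x y)
    (f : ℂ → ℂ) (hfc : Continuous f) {n : ℕ} (hn : 0 < n) (hfn : f^[n] = id)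
    (hsym : ∀ (k : ℕ) (i : Fin m), ∃ (k' : ℕ) (j : Fin m), f^[k] ∘ S i = S j ∘ f^[k'])
    (K : Set ℂ) (hKne : K.Nonempty) (hKc : IsCompact K) (hK : K = ⋃ i, S i '' K) :
    f '' K = K := by
  rcases Nat.eq_zero_or_pos m with hm | hm
  · exfalso
    subst hm
    rw [Set.iUnion_of_empty] at hK
    rw [hK] at hKne
    exact Set.not_nonempty_empty hKne
  have : Nonempty (Fin m) := ⟨⟨0, hm⟩⟩
  have hfmod : ∀ k : ℕ, f^[k] = f^[k % n] := by
    intro k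
    conv_lhs => rw [← Nat.mod_add_div k n]
    funext z
    rw [Function.iterate_add_apply, Function.iterate_mul, hfn, Function.iterate_id]
    rfl
  set ρ : ℝ := Finset.univ.sup' Finset.univ_nonempty r with hρ
  have hρlt : ρ < 1 := (Finset.sup'_lt_iff _).2 (fun i _ => hr i)
  have hρle : ∀ i, r i ≤ ρ := fun i => Finset.le_sup' r (Finset.mem_univ i)
  have hρ0 : 0 ≤ ρ := le_trans (hr0 ⟨0, hm⟩).le (hρle ⟨0, hm⟩)
  set M : Set ℂ := ⋃ k : Fin n, f^[(k:ℕ)] '' K with hM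
  have hKM : K ⊆ M := by
    intro x hx
    exact Set.mem_iUnion.2 ⟨⟨0, hn⟩, ⟨x, hx, by simp⟩⟩
  have hMc : IsCompact M := isCompact_iUnion (fun k => hKc.image (hfc.iterate _))
  have hMF : M ⊆ ⋃ i, S i '' M := by
    intro x hx
    obtain ⟨k, z, hz, rfl⟩ := Set.mem_iUnion.1 hx
    rw [hK] at hz
    obtain ⟨i, w, hw, rfl⟩ := Set.mem_iUnion.1 hz
    obtain ⟨k', j, hcomp⟩ := hsym (k:ℕ) i
    have hxe : f^[(k:ℕ)] (S i w) = S j (f^[k'] w) := congrFun hcomp w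
    have hfw : f^[k'] w ∈ M := by
      rw [hfmod k']
      exact Set.mem_iUnion.2 ⟨⟨k' % n, Nat.mod_lt _ hn⟩, ⟨w, hw, rfl⟩⟩
    rw [hxe]
    exact Set.mem_iUnion.2 ⟨j, ⟨f^[k'] w, hfw, rfl⟩⟩
  obtain ⟨p, hp⟩ := hKne
  obtain ⟨R, hR⟩ := hMc.isBounded.subset_closedBall p
  have hD : ∀ x ∈ M, Metric.infDist x K ≤ R := by
    intro x hx
    exact le_trans (Metric.infDist_le_dist_of_mem hp) (Metric.mem_closedBall.1 (hR hx))
  have claim : ∀ j : ℕ, ∀ x ∈ M, Metric.infDist x K ≤ ρ ^ j * R := by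
    intro j
    induction j with
    | zero => intro x hx; simpa using hD x hx
    | succ j ih =>
      intro x hx
      obtain ⟨i, y, hy, rfl⟩ := Set.mem_iUnion.1 (hMF hx)
      obtain ⟨k, hkK, hkd⟩ := hKc.exists_infDist_eq_dist ⟨p, hp⟩ y
      have hSik : S i k ∈ K := by
        rw [hK]; exact Set.mem_iUnion.2 ⟨i, ⟨k, hkK, rfl⟩⟩
      calc Metric.infDist (S i y) K ≤ dist (S i y) (S i k) :=
            Metric.infDist_le_dist_of_mem hSik
        _ = r i * dist y k := hS i y k
        _ = r i * Metric.infDist y K := by rw [← hkd]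
        _ ≤ ρ * (ρ ^ j * R) :=
            mul_le_mul (hρle i) (ih y hy) Metric.infDist_nonneg hρ0
        _ = ρ ^ (j+1) * R := by ring
  have hMK : M ⊆ K := by
    intro x hx
    have htend : Filter.Tendsto (fun j : ℕ => ρ ^ j * R) Filter.atTop (nhds 0) := by
      have := (tendsto_pow_atTop_nhds_zero_of_lt_one hρ0 hρlt).mul_const R
      rwa [zero_mul] at this
    have hle : Metric.infDist x K ≤ 0 :=
      ge_of_tendsto htend (Filter.Eventually.of_forall (fun j => claim j x hx))
    have : Metric.infDist x K = 0 := le_antisymm hle Metric.infDist_nonneg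
    exact (hKc.isClosed.mem_iff_infDist_zero ⟨p, hp⟩).2 this
  apply Set.Subset.antisymm
  · intro x hx
    obtain ⟨y, hy, rfl⟩ := hx
    apply hMK
    have : f y = f^[1 % n] y := by rw [← hfmod 1, Function.iterate_one]
    rw [this]
    exact Set.mem_iUnion.2 ⟨⟨1 % n, Nat.mod_lt _ hn⟩, ⟨y, hy, rfl⟩⟩
  · intro x hx
    have hxfix : f (f^[n-1] x) = x := by
      have : f^[n-1+1] x = x := by
        rw [Nat.sub_add_cancel hn, hfn]; rfl
      conv_rhs => rw [← this]
      rw [Function.iterate_succ_apply']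
    refine ⟨f^[n-1] x, ?_, hxfix⟩
    apply hMK
    exact Set.mem_iUnion.2 ⟨⟨n-1, Nat.sub_lt hn one_pos⟩, ⟨x, hx, rfl⟩⟩

end Stmt17Rot


open Fin.NatCast Fin.CommRing

/-- Let `K` be the attractor (a dendrite) of a `G`-symmetric
`P`-polygonal system, `P` a regular `n`-gon with center `O`, vertices `v k`, and `G`
containing the rotation group of `P` (generated by the rotation `f` by `2π/n`
about `O`). If `γ` is the arc in `K` joining `O` to a vertex `A = v k₀`, then the
main tree `γ̂ = ⋃_{i<j} γ_{v_i v_j}` equals `⋃_{k=1}^n f^k(γ)`, and `O` has order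
`n` in `γ̂` (i.e. `γ̂ \ {O}` has exactly `n` connected components). -/
theorem stmt17 (n : ℕ) (hn : 3 ≤ n) (O c : ℂ) (hc : c ≠ 0)
    (v : Fin n → ℂ) (hv : ∀ k : Fin n, v k = O + c * Complex.exp (2 * π * Complex.I * k / n))
    (P : Set ℂ) (hP : P = convexHull ℝ (Set.range v))
    (f : ℂ → ℂ) (hf : ∀ z : ℂ, f z = O + Complex.exp (2 * π * Complex.I / n) * (z - O))
    -- the system of contracting similarities
    {m : ℕ} (S : Fin m → ℂ → ℂ) (r : Fin m → ℝ)
    (hr : ∀ i, r i < 1) (hr0 : ∀ i, 0 < r i)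
    (hS : ∀ i, ∀ x y : ℂ, dist (S i x) (S i y) = r i * dist x y)
    -- (D1)
    (hD1 : ∀ i, S i '' P ⊆ P)
    -- (D2)
    (hD2 : ∀ i j : Fin m, i ≠ j → S i '' P ∩ S j '' P = ∅ ∨
      ∃ p : ℂ, S i '' P ∩ S j '' P = {p} ∧
        p ∈ S i '' Set.range v ∧ p ∈ S j '' Set.range v)
    -- (D3)
    (hD3 : ∀ k : Fin n, ∃ i : Fin m, ∃ l : Fin n, S i (v l) = v k)
    -- (D4)
    (hD4 : ContractibleSpace ↥(⋃ i, S i '' P))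
    -- G-symmetry, G ⊇ the rotation group of P generated by f
    (hsym : ∀ (k : ℕ) (i : Fin m), ∃ (k' : ℕ) (j : Fin m),
      f^[k] ∘ S i = S j ∘ f^[k'])
    -- the attractor K
    (K : Set ℂ) (hKne : K.Nonempty) (hKc : IsCompact K)
    (hK : K = ⋃ i, S i '' K)
    (hOK : O ∈ K) (hvK : ∀ k : Fin n, v k ∈ K)
    -- K is a dendrite: unique arcwise connectedness, encoded by an arc function
    (arc : ℂ → ℂ → Set ℂ)
    (harc : ∀ a b : ℂ, a ∈ K → b ∈ K → a ≠ b →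
      IsArc (arc a b) a b ∧ arc a b ⊆ K)
    (harc_uniq : ∀ (a b : ℂ) (A : Set ℂ), a ∈ K → b ∈ K → a ≠ b →
      IsArc A a b → A ⊆ K → A = arc a b)
    (harc_refl : ∀ a : ℂ, arc a a = {a})
    -- the arc γ from O to the vertex A = v k₀, and the main tree γ̂
    (k₀ : Fin n) (γ : Set ℂ) (hγ : γ = arc O (v k₀))
    (γhat : Set ℂ)
    (hγhat : γhat = ⋃ (i : Fin n), ⋃ (j : Fin n), ⋃ (_ : i < j), arc (v i) (v j)) :
    γhat = ⋃ k ∈ Finset.Icc 1 n, f^[k] '' γ ∧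
      {C : Set ℂ | ∃ x ∈ γhat \ {O}, C = connectedComponentIn (γhat \ {O}) x}.ncard
        = n := by
  classical
  have hn0 : 0 < n := by omega
  have : NeZero n := ⟨hn0.ne'⟩
  have H : ArcSystem K arc := ⟨harc, harc_uniq, harc_refl⟩
  set ω : ℂ := Complex.exp (2 * π * Complex.I / n) with hω
  have hωn : ω ^ n = 1 := Stmt17Rot.omega_pow_n hn0
  have hωne1 : ∀ k : ℕ, 0 < k → k < n → ω ^ k ≠ 1 :=
    fun k h1 h2 => Stmt17Rot.omega_pow_ne_one hn0 h1 h2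
  have hω0 : ω ≠ 0 := Complex.exp_ne_zero _
  have hfk : ∀ (k : ℕ) (z : ℂ), f^[k] z = O + ω ^ k * (z - O) :=
    Stmt17Rot.iterate_rot hf
  have hfc : Continuous f := by
    have : f = fun z => O + ω * (z - O) := funext hf
    rw [this]
    exact continuous_const.add (continuous_const.mul (continuous_id.sub continuous_const))
  have hfinj : Function.Injective f := by
    intro x y hxy
    rw [hf x, hf y] at hxy
    have h1 : ω * (x - O) = ω * (y - O) := by linear_combination hxy
    have h2 : x - O = y - O := mul_left_cancel₀ hω0 h1
    linear_combination h2
  have hfn_id : f^[n] = id := by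
    funext z
    rw [hfk n z, hωn]
    show O + 1 * (z - O) = z
    ring
  have hfO : ∀ k : ℕ, f^[k] O = O := by
    intro k; rw [hfk]; ring
  have hfix : ∀ (k : ℕ) (z : ℂ), 0 < k → k < n → f^[k] z = z → z = O := by
    intro k z h1 h2 hz
    rw [hfk k z] at hz
    have : (ω ^ k - 1) * (z - O) = 0 := by linear_combination hz
    rcases mul_eq_zero.1 this with h | h
    · exact absurd (by linear_combination h) (hωne1 k h1 h2)
    · linear_combination h
  have hωpow : ∀ a : ℕ, ω ^ a = Complex.exp (2 * π * Complex.I * a / n) :=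
    Stmt17Rot.exp_pow n
  have hv' : ∀ k : Fin n, v k = O + c * ω ^ (k : ℕ) := by
    intro k
    rw [hv k, hωpow]
  have hωmod : ∀ a : ℕ, ω ^ (a % n) = ω ^ a := by
    intro a
    conv_rhs => rw [← Nat.mod_add_div a n]
    rw [pow_add, pow_mul, hωn, one_pow, mul_one]
  have hfv : ∀ (j : ℕ) (k : Fin n), f^[j] (v k) = v (k + (j : Fin n)) := by
    intro j k
    rw [hfk, hv' k, hv' (k + (j : Fin n))]
    have hval : ((k + (j : Fin n) : Fin n) : ℕ) = ((k : ℕ) + j % n) % n := by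
      rw [Fin.val_add, Fin.val_natCast]
    have : ω ^ ((k + (j : Fin n) : Fin n) : ℕ) = ω ^ j * ω ^ (k : ℕ) := by
      rw [hval, hωmod, pow_add, hωmod, mul_comm]
    rw [this]
    ring
  have hvO : ∀ k : Fin n, v k ≠ O := by
    intro k h
    rw [hv' k] at h
    have : c * ω ^ (k:ℕ) = 0 := by linear_combination h
    exact (mul_ne_zero hc (pow_ne_zero _ hω0)) this
  have hvinj : Function.Injective v := by
    have key : ∀ a b : Fin n, (a:ℕ) ≤ (b:ℕ) → v a = v b → a = b := by
      intro a b hab heq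
      rw [hv' a, hv' b] at heq
      have h1 : c * ω ^ (a:ℕ) = c * ω ^ (b:ℕ) := by linear_combination heq
      have h2 : ω ^ (a:ℕ) = ω ^ (b:ℕ) := mul_left_cancel₀ hc h1
      have h3 : ω ^ (b:ℕ) = ω ^ (a:ℕ) * ω ^ ((b:ℕ) - (a:ℕ)) := by
        rw [← pow_add, Nat.add_sub_cancel' hab]
      have h4 : ω ^ ((b:ℕ) - (a:ℕ)) = 1 := by
        have hωa : ω ^ (a:ℕ) ≠ 0 := pow_ne_zero _ hω0
        rw [← h2] at h3
        exact (mul_left_cancel₀ hωa (by rw [mul_one]; exact h3)).symm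
      by_contra hne
      have hlt : 0 < (b:ℕ) - (a:ℕ) := by
        rcases lt_or_eq_of_le hab with h | h
        · omega
        · exact absurd (Fin.ext h) hne
      exact hωne1 _ hlt (by omega) h4
    intro a b heq
    rcases le_total (a:ℕ) (b:ℕ) with h | h
    · exact key a b h heq
    · exact (key b a h heq.symm).symm
  have hfK : f '' K = K :=
    Stmt17Rot.attractor_rot_invariant S r hr hr0 hS f hfc hn0 hfn_id hsym K hKne hKc hK
  have hfkK : ∀ k : ℕ, f^[k] '' K = K := by
    intro k
    induction k with
    | zero => simp
    | succ k ih =>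
      rw [Function.iterate_succ', Set.image_comp, ih, hfK]
  -- the arcs from the center to the vertices
  set Γ : Fin n → Set ℂ := fun a => arc O (v a) with hΓ
  have hΓK : ∀ a, Γ a ⊆ K := fun a => H.arc_subset hOK (hvK a)
  have hOΓ : ∀ a, O ∈ Γ a := fun a => H.mem_left hOK (hvK a)
  have hvΓ : ∀ a, v a ∈ Γ a := fun a => H.mem_right hOK (hvK a)
  have hΓc : ∀ a, IsCompact (Γ a) := fun a => H.arc_isCompact hOK (hvK a)
  have hΓim : ∀ (j : ℕ) (a : Fin n), f^[j] '' Γ a = Γ (a + (j : Fin n)) := by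
    intro j a
    show f^[j] '' arc O (v a) = arc O (v (a + (j : Fin n)))
    rw [H.arc_image (hfc.iterate j) (hfinj.iterate j) (hfkK j) hOK (hvK a)
      (Ne.symm (hvO a)), hfO j, hfv j a]
  have hcast : ∀ x y : ℕ, x % n = y % n → ((x : Fin n) = (y : Fin n)) := by
    intro x y hxy
    ext
    rw [Fin.val_natCast, Fin.val_natCast, hxy]
  -- (C): the arcs to distinct vertices intersect only at the center
  have hC : ∀ a b : Fin n, a ≠ b → Γ a ∩ Γ b = {O} := by
    have hrot : ∀ (e a b : Fin n), (∃ x, x ≠ O ∧ x ∈ Γ a ∩ Γ b) →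
        ∃ x, x ≠ O ∧ x ∈ Γ (a + e) ∩ Γ (b + e) := by
      rintro e a b ⟨x, hxO, hxa, hxb⟩
      refine ⟨f^[(e:ℕ)] x, ?_, ?_, ?_⟩
      · intro h
        apply hxO
        apply hfinj.iterate (e:ℕ)
        rw [h, hfO]
      · have h1 : f^[(e:ℕ)] x ∈ f^[(e:ℕ)] '' Γ a := Set.mem_image_of_mem _ hxa
        rw [hΓim, Fin.cast_val_eq_self e] at h1
        exact h1
      · have h1 : f^[(e:ℕ)] x ∈ f^[(e:ℕ)] '' Γ b := Set.mem_image_of_mem _ hxb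
        rw [hΓim, Fin.cast_val_eq_self e] at h1
        exact h1
    by_contra hcon
    push_neg at hcon
    obtain ⟨a, b, hab, hne⟩ := hcon
    have hOab : O ∈ Γ a ∩ Γ b := ⟨hOΓ a, hOΓ b⟩
    have hex : ∃ x, x ≠ O ∧ x ∈ Γ a ∩ Γ b := by
      by_contra h
      push_neg at h
      apply hne
      ext x
      simp only [Set.mem_singleton_iff]
      constructor
      · intro hx
        by_contra hxO
        exact (h x hxO) hx
      · rintro rfl
        exact hOab
    set d : Fin n := b - a with hd
    have hd0 : d ≠ 0 := by
      rw [hd, sub_ne_zero]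
      exact Ne.symm hab
    have hdval0 : 0 < (d:ℕ) := by
      rcases Nat.eq_zero_or_pos (d:ℕ) with h | h
      · exact absurd (Fin.ext h) hd0
      · exact h
    have hbase : ∃ y, y ≠ O ∧ y ∈ Γ a ∩ Γ (a + d) := by
      have : a + d = b := by rw [hd]; ring
      rw [this]
      exact hex
    have hchain : ∀ k : ℕ, ∃ x, x ≠ O ∧ x ∈ Γ a ∩ Γ (a + ((k * (d:ℕ) : ℕ) : Fin n)) := by
      intro k
      induction k with
      | zero =>
        refine ⟨v a, hvO a, hvΓ a, ?_⟩
        have : ((0 * (d:ℕ) : ℕ) : Fin n) = 0 := by norm_num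
        rw [this, add_zero]
        exact hvΓ a
      | succ k ih =>
        obtain ⟨x, hxO, hxa, hxk⟩ := ih
        set e : Fin n := ((k * (d:ℕ) : ℕ) : Fin n) with he
        obtain ⟨y, hyO, hya, hyd⟩ := hrot e a (a + d) hbase
        have hmid : a + d + e = a + (((k+1) * (d:ℕ) : ℕ) : Fin n) := by
          have h1 : (((k+1) * (d:ℕ) : ℕ) : Fin n) = e + d := by
            rw [he]
            have : ((k+1) * (d:ℕ) : ℕ) = k * (d:ℕ) + (d:ℕ) := by ring
            rw [this, Nat.cast_add, Fin.cast_val_eq_self d]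
          rw [h1]
          ring
        have hxK : x ∈ K := hΓK a hxa
        have hyK : y ∈ K := hΓK (a+e) hya
        have hxe : x ∈ Γ (a + e) := hxk
        rcases H.arc_nested hOK (hvK (a+e)) (Ne.symm (hvO (a+e))) hxe hya with hs | hs
        · refine ⟨x, hxO, hxa, ?_⟩
          rw [← hmid]
          have hxmem : x ∈ arc O x := H.mem_right hOK hxK
          exact H.arc_initial_subset hOK (hvK (a+d+e)) (Ne.symm (hvO (a+d+e))) hyd (hs hxmem)
        · refine ⟨y, hyO, ?_, ?_⟩
          · have hymem : y ∈ arc O y := H.mem_right hOK hyK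
            exact H.arc_initial_subset hOK (hvK a) (Ne.symm (hvO a)) hxa (hs hymem)
          · rw [← hmid]
            exact hyd
    obtain ⟨⟨φ, φc, φi, φr, φ0, φ1⟩, hsubΓa⟩ := H.ex O (v a) hOK (hvK a) (Ne.symm (hvO a))
    choose z hzO hz using fun j : Fin n => hchain ((j:ℕ))
    have hza : ∀ j, z j ∈ Γ a := fun j => (hz j).1
    have hzt : ∀ j : Fin n, ∃ t : I, φ t = z j := by
      intro j
      have : z j ∈ Set.range φ := by rw [φr]; exact hza j
      exact this
    choose t ht using hzt
    have htne : ∀ j, t j ≠ 0 := by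
      intro j h
      apply hzO j
      rw [← ht j, h, φ0]
    have : Nonempty (Fin n) := ⟨⟨0, hn0⟩⟩
    obtain ⟨j₀, _, hj₀⟩ := Finset.exists_min_image Finset.univ t Finset.univ_nonempty
    set C : Set ℂ := ⋂ e : Fin n, Γ (a + (((e:ℕ) * (d:ℕ) : ℕ) : Fin n)) with hCdef
    have harcsub : ∀ j : Fin n, ∀ x, x ∈ arc O (z j) → x ∈ Γ (a + (((j:ℕ) * (d:ℕ) : ℕ) : Fin n)) := by
      intro j x hx
      exact H.arc_initial_subset hOK (hvK _) (Ne.symm (hvO _)) (hz j).2 hx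
    have hzC : z j₀ ∈ C := by
      refine Set.mem_iInter.2 fun e => ?_
      apply harcsub e
      have harce : arc O (z e) = φ '' {s : I | s ≤ t e} := by
        rw [← ht e]
        exact H.arc_left_param hOK (hvK a) (Ne.symm (hvO a)) φc φi φr φ0 (htne e)
      rw [harce, ← ht j₀]
      exact ⟨t j₀, hj₀ e (Finset.mem_univ e), rfl⟩
    have hCclosed : IsClosed C := isClosed_iInter (fun e => (hΓc _).isClosed)
    have hdown : ∀ x ∈ arc O (v a) ∩ C, arc O x ⊆ C := by
      rintro x ⟨hx1, hx2⟩ y hy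
      refine Set.mem_iInter.2 fun e => ?_
      exact H.arc_initial_subset hOK (hvK _) (Ne.symm (hvO _)) (Set.mem_iInter.1 hx2 e) hy
    obtain ⟨w, ⟨hwarc, hwC⟩, hwO, hweq⟩ :=
      H.arc_meet hOK (hvK a) (Ne.symm (hvO a)) hCclosed hdown
        ⟨z j₀, ⟨hza j₀, hzC⟩, hzO j₀⟩
    have hCΓa : C ⊆ Γ a := by
      have h0 : Γ (a + (((((0:Fin n)):ℕ) * (d:ℕ) : ℕ) : Fin n)) = Γ a := by
        norm_num
      have := Set.iInter_subset
        (fun e : Fin n => Γ (a + (((e:ℕ) * (d:ℕ) : ℕ) : Fin n))) (0 : Fin n)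
      rw [h0] at this
      exact this
    have hCw : C = arc O w := by
      rw [← hweq]
      exact (Set.inter_eq_self_of_subset_right hCΓa).symm
    -- rotation invariance of C
    set g : ℂ → ℂ := f^[(d:ℕ)] with hg
    have hgbij : Function.Bijective g := by
      constructor
      · exact hfinj.iterate _
      · intro ycc
        refine ⟨f^[n - (d:ℕ)] ycc, ?_⟩
        rw [hg, ← Function.iterate_add_apply]
        have : (d:ℕ) + (n - (d:ℕ)) = n := by omega
        rw [this, hfn_id]
        rfl
    have hgC : g '' C = C := by
      rw [hCdef, Set.image_iInter hgbij]
      have hstep : ∀ e : Fin n, g '' Γ (a + (((e:ℕ) * (d:ℕ) : ℕ) : Fin n)) =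
          Γ (a + ((((e:ℕ)+1) * (d:ℕ) : ℕ) : Fin n)) := by
        intro e
        rw [hg, hΓim ((d:ℕ)) _, Fin.cast_val_eq_self d]
        congr 1
        have : ((((e:ℕ)+1) * (d:ℕ) : ℕ) : Fin n) = (((e:ℕ) * (d:ℕ) : ℕ) : Fin n) + d := by
          have h1 : (((e:ℕ)+1) * (d:ℕ) : ℕ) = (e:ℕ) * (d:ℕ) + (d:ℕ) := by ring
          rw [h1, Nat.cast_add, Fin.cast_val_eq_self d]
        rw [this]
        ring
      have hre : ∀ e : Fin n, ((((e:ℕ)+1) * (d:ℕ) : ℕ) : Fin n) =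
          ((((e+1 : Fin n):ℕ) * (d:ℕ) : ℕ) : Fin n) := by
        intro e
        rw [Nat.cast_mul, Nat.cast_mul, Nat.cast_add, Nat.cast_one,
          Fin.cast_val_eq_self, Fin.cast_val_eq_self, Fin.cast_val_eq_self]
      calc (⋂ e : Fin n, g '' Γ (a + (((e:ℕ) * (d:ℕ) : ℕ) : Fin n)))
          = ⋂ e : Fin n, Γ (a + ((((e:ℕ)+1) * (d:ℕ) : ℕ) : Fin n)) :=
            Set.iInter_congr hstep
        _ = ⋂ e : Fin n, Γ (a + ((((e+1:Fin n):ℕ) * (d:ℕ) : ℕ) : Fin n)) :=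
            Set.iInter_congr (fun e => by rw [hre e])
        _ = ⋂ e : Fin n, Γ (a + (((e:ℕ) * (d:ℕ) : ℕ) : Fin n)) := by
            have hsurj : Function.Surjective (fun e : Fin n => e + 1) :=
              fun y => ⟨y - 1, by ring⟩
            exact hsurj.iInter_comp
              (fun cc : Fin n => Γ (a + (((cc:ℕ) * (d:ℕ) : ℕ) : Fin n)))
    -- transport the endpoint
    have hwK : w ∈ K := hΓK a hwarc
    have hOw : O ≠ w := Ne.symm hwO
    have hgwK : g w ∈ K := by
      rw [← hfkK (d:ℕ)]
      exact Set.mem_image_of_mem _ hwK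
    have h1 : g '' arc O w = arc O (g w) := by
      have := H.arc_image (hfc.iterate (d:ℕ)) (hfinj.iterate (d:ℕ)) (hfkK (d:ℕ)) hOK hwK hOw
      rwa [hfO] at this
    have hgw : arc O (g w) = arc O w := by
      rw [← h1, ← hCw, hgC, hCw]
    have hgwO : O ≠ g w := by
      intro h'
      apply hwO
      apply hfinj.iterate (d:ℕ)
      show f^[(d:ℕ)] w = f^[(d:ℕ)] O
      rw [hfO]
      exact h'.symm
    have hIs1 : IsArc (arc O w) O w := (H.ex O w hOK hwK hOw).1
    have hIs2 : IsArc (arc O w) O (g w) := by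
      rw [← hgw]
      exact (H.ex O (g w) hOK hgwK hgwO).1
    have hwgw : w = g w := isArc_endpoint_unique hIs1 hIs2
    exact hwO (hfix (d:ℕ) w hdval0 d.isLt hwgw.symm)
  -- (D): the arc between two vertices passes through the center
  have hD : ∀ a b : Fin n, a ≠ b → arc (v a) (v b) = Γ a ∪ Γ b := by
    intro a b hab
    have hvab : v a ≠ v b := fun h => hab (hvinj h)
    have hsubu : arc (v a) (v b) ⊆ Γ a ∪ Γ b := by
      have h := H.arc_concat (hvK a) (hvK b) hOK
      rwa [H.arc_symm (hvK a) hOK] at h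
    have hOarc : O ∈ arc (v a) (v b) := by
      by_contra hO
      have hpc : IsPreconnected (arc (v a) (v b)) := H.arc_isPreconnected (hvK a) (hvK b)
      have hcov : arc (v a) (v b) ⊆ (Γ b)ᶜ ∪ (Γ a)ᶜ := by
        intro x hx
        rcases hsubu hx with h | h
        · left
          intro hxb
          have hxab : x ∈ Γ a ∩ Γ b := ⟨h, hxb⟩
          rw [hC a b hab] at hxab
          exact hO (by rwa [Set.mem_singleton_iff.1 hxab] at hx)
        · right
          intro hxa
          have hxab : x ∈ Γ a ∩ Γ b := ⟨hxa, h⟩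
          rw [hC a b hab] at hxab
          exact hO (by rwa [Set.mem_singleton_iff.1 hxab] at hx)
      have hne1 : (arc (v a) (v b) ∩ (Γ b)ᶜ).Nonempty := by
        refine ⟨v a, H.mem_left (hvK a) (hvK b), fun hvb => ?_⟩
        have hxab : v a ∈ Γ a ∩ Γ b := ⟨hvΓ a, hvb⟩
        rw [hC a b hab] at hxab
        exact hvO a (Set.mem_singleton_iff.1 hxab)
      have hne2 : (arc (v a) (v b) ∩ (Γ a)ᶜ).Nonempty := by
        refine ⟨v b, H.mem_right (hvK a) (hvK b), fun hvb => ?_⟩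
        have hxab : v b ∈ Γ a ∩ Γ b := ⟨hvb, hvΓ b⟩
        rw [hC a b hab] at hxab
        exact hvO b (Set.mem_singleton_iff.1 hxab)
      obtain ⟨x, hxs, hxu, hxv⟩ := hpc _ _ (hΓc b).isClosed.isOpen_compl
        (hΓc a).isClosed.isOpen_compl hcov hne1 hne2
      rcases hsubu hxs with h | h
      · exact hxv h
      · exact hxu h
    rw [H.arc_split (hvK a) (hvK b) hvab hOarc, H.arc_symm (hvK a) hOK]
  have hγhatΓ : γhat = ⋃ a : Fin n, Γ a := by
    rw [hγhat]
    apply Set.Subset.antisymm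
    · refine Set.iUnion_subset fun i => Set.iUnion_subset fun j => Set.iUnion_subset fun hij => ?_
      rw [hD i j (Fin.ne_of_lt hij)]
      exact Set.union_subset (Set.subset_iUnion Γ i) (Set.subset_iUnion Γ j)
    · refine Set.iUnion_subset fun a => ?_
      have hval1 : ((1:Fin n):ℕ) = 1 := by
        rw [Fin.val_one']
        exact Nat.mod_eq_of_lt (by omega)
      by_cases ha0 : a = 0
      · have h01 : (0:Fin n) < 1 := by
          rw [Fin.lt_def, hval1]
          norm_num
        have hsub : Γ 0 ⊆ arc (v 0) (v 1) := by
          rw [hD 0 1 (Fin.ne_of_lt h01)]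
          exact Set.subset_union_left
        intro x hx
        rw [ha0] at hx
        exact Set.mem_iUnion.2 ⟨0, Set.mem_iUnion.2 ⟨1, Set.mem_iUnion.2 ⟨h01, hsub hx⟩⟩⟩
      · have h0a : (0:Fin n) < a := by
          rw [Fin.lt_def, Fin.val_zero]
          exact Nat.pos_of_ne_zero (fun h => ha0 (Fin.ext h))
        have hsub : Γ a ⊆ arc (v 0) (v a) := by
          rw [hD 0 a (Fin.ne_of_lt h0a)]
          exact Set.subset_union_right
        intro x hx
        exact Set.mem_iUnion.2 ⟨0, Set.mem_iUnion.2 ⟨a, Set.mem_iUnion.2 ⟨h0a, hsub hx⟩⟩⟩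
  have hiter : ∀ k : ℕ, f^[k] '' γ = Γ (k₀ + (k : Fin n)) := by
    intro k
    rw [hγ]
    exact hΓim k k₀
  constructor
  · -- the first statement
    rw [hγhatΓ]
    apply Set.Subset.antisymm
    · refine Set.iUnion_subset fun a => ?_
      by_cases hak : a = k₀
      · intro x hx
        refine Set.mem_iUnion₂.2 ⟨n, Finset.mem_Icc.2 ⟨by omega, le_refl n⟩, ?_⟩
        rw [hiter n]
        have hn' : ((n:ℕ) : Fin n) = 0 := by
          ext
          simp [Fin.val_natCast]
        rw [hn', add_zero, ← hak]
        exact hx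
      · intro x hx
        have hsub0 : a - k₀ ≠ 0 := by
          rw [sub_ne_zero]
          exact hak
        have hval0 : 0 < ((a - k₀ : Fin n):ℕ) := by
          rcases Nat.eq_zero_or_pos ((a - k₀ : Fin n):ℕ) with h | h
          · exact absurd (Fin.ext h) hsub0
          · exact h
        refine Set.mem_iUnion₂.2 ⟨((a - k₀ : Fin n):ℕ),
          Finset.mem_Icc.2 ⟨hval0, (a - k₀ : Fin n).isLt.le⟩, ?_⟩
        rw [hiter, Fin.cast_val_eq_self]
        have : k₀ + (a - k₀) = a := by ring
        rw [this]
        exact hx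
    · refine Set.iUnion₂_subset fun k hk => ?_
      rw [hiter k]
      exact Set.subset_iUnion Γ _
  · -- the number of connected components
    haveI fact01 : Fact ((0:ℝ) ≤ 1) := ⟨zero_le_one⟩
    set X' := γhat \ {O} with hX'
    set U : Fin n → Set ℂ := fun a => Γ a \ {O} with hUdef
    have hXU : X' = ⋃ a, U a := by
      rw [hX', hγhatΓ, Set.iUnion_diff]
    have hUsub : ∀ a, U a ⊆ X' := fun a => hXU ▸ Set.subset_iUnion U a
    have hvU : ∀ a, v a ∈ U a := fun a => ⟨hvΓ a, by simp [hvO a]⟩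
    have hUdisj : ∀ a b : Fin n, a ≠ b → ∀ x, x ∈ U a → x ∈ U b → False := by
      rintro a b hab x ⟨hxa, hxO⟩ ⟨hxb, _⟩
      have hxab : x ∈ Γ a ∩ Γ b := ⟨hxa, hxb⟩
      rw [hC a b hab] at hxab
      exact hxO hxab
    have hUconn : ∀ a, IsPreconnected (U a) := by
      intro a
      obtain ⟨⟨φ, φc, φi, φr, φ0, φ1⟩, _⟩ := H.ex O (v a) hOK (hvK a) (Ne.symm (hvO a))
      have himg : U a = φ '' (Set.Ioi 0) := by
        ext x
        constructor
        · rintro ⟨hx1, hx2⟩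
          have hx1' : x ∈ Set.range φ := by rw [φr]; exact hx1
          obtain ⟨t, rfl⟩ := hx1'
          have ht0 : t ≠ 0 := by
            rintro rfl
            exact hx2 (by rw [φ0]; rfl)
          refine ⟨t, ?_, rfl⟩
          exact lt_of_le_of_ne (by exact t.2.1 : (0:I) ≤ t) (Ne.symm ht0)
        · rintro ⟨t, ht, rfl⟩
          have hmem : φ t ∈ Set.range φ := Set.mem_range_self t
          rw [φr] at hmem
          refine ⟨hmem, ?_⟩
          intro hφt
          have : φ t = φ 0 := by
            rw [φ0]
            exact Set.mem_singleton_iff.1 hφt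
          exact (ne_of_gt (Set.mem_Ioi.1 ht)) (φi this)
      rw [himg]
      exact isPreconnected_Ioi.image φ φc.continuousOn
    have hmemX : ∀ (x : ℂ) (a : Fin n), x ∈ X' → x ∈ Γ a → x ∈ U a := by
      intro x a hxX hxa
      exact ⟨hxa, hxX.2⟩
    have hcomp : ∀ a : Fin n, ∀ x ∈ U a, connectedComponentIn X' x = U a := by
      intro a x hx
      apply Set.Subset.antisymm
      · intro y hy
        have hyX : y ∈ X' := connectedComponentIn_subset _ _ hy
        obtain ⟨b, hyb⟩ := Set.mem_iUnion.1 (hXU ▸ hyX)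
        by_cases hb : b = a
        · rwa [hb] at hyb
        exfalso
        set W : Set ℂ := ⋃ e : Fin n, ⋃ (_ : e ≠ a), Γ e with hW
        have hWclosed : IsClosed W :=
          isClosed_iUnion_of_finite (fun e => isClosed_iUnion_of_finite
            (fun _ => (hΓc e).isClosed))
        have hinW : ∀ p : ℂ, p ∈ X' → p ∉ Γ a → p ∈ W := by
          intro p hpX hpa
          obtain ⟨e, hpe⟩ := Set.mem_iUnion.1 (hXU ▸ hpX)
          have hea : e ≠ a := by
            rintro rfl
            exact hpa hpe.1
          exact Set.mem_iUnion.2 ⟨e, Set.mem_iUnion.2 ⟨hea, hpe.1⟩⟩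
        have hnotW : ∀ p : ℂ, p ∈ X' → p ∈ Γ a → p ∉ W := by
          intro p hpX hpa hpW
          obtain ⟨e, hpe⟩ := Set.mem_iUnion.1 hpW
          obtain ⟨hea, hpe'⟩ := Set.mem_iUnion.1 hpe
          have hpab : p ∈ Γ e ∩ Γ a := ⟨hpe', hpa⟩
          rw [hC e a hea] at hpab
          exact hpX.2 hpab
        have hpc := isPreconnected_connectedComponentIn (x := x) (F := X')
        have hcsub : connectedComponentIn X' x ⊆ X' := connectedComponentIn_subset _ _
        have hcov : connectedComponentIn X' x ⊆ Wᶜ ∪ (Γ a)ᶜ := by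
          intro p hp
          have hpX := hcsub hp
          by_cases hpa : p ∈ Γ a
          · exact Or.inl (hnotW p hpX hpa)
          · exact Or.inr hpa
        have hxc : x ∈ connectedComponentIn X' x :=
          mem_connectedComponentIn (hUsub a hx)
        have hne1 : (connectedComponentIn X' x ∩ Wᶜ).Nonempty := by
          refine ⟨x, hxc, hnotW x (hUsub a hx) hx.1⟩
        have hne2 : (connectedComponentIn X' x ∩ (Γ a)ᶜ).Nonempty := by
          refine ⟨y, hy, fun hya => ?_⟩
          exact hUdisj b a hb y hyb ⟨hya, hyX.2⟩
        obtain ⟨q, hqc, hqW, hqa⟩ := hpc _ _ hWclosed.isOpen_compl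
          (hΓc a).isClosed.isOpen_compl hcov hne1 hne2
        exact hqW (hinW q (hcsub hqc) hqa)
      · exact (hUconn a).subset_connectedComponentIn hx (hUsub a)
    have hset : {C : Set ℂ | ∃ x ∈ X', C = connectedComponentIn X' x} = Set.range U := by
      ext A
      constructor
      · rintro ⟨x, hxX, rfl⟩
        obtain ⟨a, hxa⟩ := Set.mem_iUnion.1 (hXU ▸ hxX)
        exact ⟨a, (hcomp a x hxa).symm⟩
      · rintro ⟨a, rfl⟩
        exact ⟨v a, hUsub a (hvU a), (hcomp a (v a) (hvU a)).symm⟩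
    rw [hset]
    have hUinj : Function.Injective U := by
      intro a b hUab
      by_contra hab
      exact hUdisj a b hab (v a) (hvU a) (hUab ▸ hvU a)
    rw [← Set.image_univ, Set.ncard_image_of_injective _ hUinj, Set.ncard_univ,
      Nat.card_eq_fintype_card, Fintype.card_fin]
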